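/- For all β > 0 and λ ≥ 0, one has ∑_{k≥1} (λ - (k-1/2)√β)_+² ≤ λ³/(3√β) - (√β/12)λ + β/(36√3). -/

import Mathlib

lemma key_ineq (t n : ℝ) (h1 : n ≤ t + 1/2) (h2 : t ≤ n + 1/2) :
    n*t^2 - n^2*t + n^3/3 - n/12 ≤ t^3/3 - t/12 + 1/(36*Real.sqrt 3) := by
  have hc : (Real.sqrt 3)^2 = 3 := Real.sq_sqrt (by norm_num)
  have hc0 : (0:ℝ) < Real.sqrt 3 := Real.sqrt_pos.2 (by norm_num)
  have hc2 : Real.sqrt 3 ≤ 2 := by nlinarith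
  have hkey : 0 ≤ (Real.sqrt 3*(t-n)+1) * (2*Real.sqrt 3*(t-n)-1)^2 := by
    apply mul_nonneg _ (sq_nonneg _)
    nlinarith
  have h36 : (0:ℝ) < 36 * Real.sqrt 3 := by positivity
  have heq : t^3/3 - t/12 + 1/(36*Real.sqrt 3) - (n*t^2 - n^2*t + n^3/3 - n/12)
      = ((Real.sqrt 3*(t-n)+1) * (2*Real.sqrt 3*(t-n)-1)^2) / (36*Real.sqrt 3) := by
    field_simp
    ring_nf
    linear_combination (-144*Real.sqrt 3*(t-n)^3) * hc
  nlinarith [div_nonneg hkey h36.le, heq]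

lemma sum_formula (x s : ℝ) (n : ℕ) :
    ∑ k ∈ Finset.range n, (x - ((k:ℝ)+1-1/2)*s)^2
      = n*x^2 - (n:ℝ)^2*x*s + s^2*((n:ℝ)^3/3 - (n:ℝ)/12) := by
  induction n with
  | zero => simp
  | succ m ih =>
    rw [Finset.sum_range_succ, ih]
    push_cast
    ring

theorem stmt_3 (β lam : ℝ) (hβ : 0 < β) (hlam : 0 ≤ lam) :
    ∑' k : ℕ, (max (lam - ((k : ℝ) + 1 - 1/2) * Real.sqrt β) 0) ^ 2
      ≤ lam ^ 3 / (3 * Real.sqrt β) - (Real.sqrt β / 12) * lam + β / (36 * Real.sqrt 3) := by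
  set s := Real.sqrt β with hsdef
  have hs : 0 < s := Real.sqrt_pos.2 hβ
  have hβs : β = s^2 := (Real.sq_sqrt hβ.le).symm
  set t : ℝ := lam / s with htdef
  have ht0 : 0 ≤ t := div_nonneg hlam hs.le
  set n : ℕ := ⌊t + 1/2⌋₊ with hn
  have hn1 : (n:ℝ) ≤ t + 1/2 := Nat.floor_le (by linarith)
  have hn2 : t + 1/2 < (n:ℝ) + 1 := Nat.lt_floor_add_one _
  have hlam_eq : lam = t * s := by rw [htdef, div_mul_cancel₀ _ hs.ne']
  have hzero : ∀ k ∉ Finset.range n, (max (lam - ((k:ℝ)+1-1/2)*s) 0)^2 = 0 := by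
    intro k hk
    simp only [Finset.mem_range, not_lt] at hk
    have hkn : (n:ℝ) ≤ (k:ℝ) := by exact_mod_cast hk
    have hle : lam - ((k:ℝ)+1-1/2)*s ≤ 0 := by
      rw [hlam_eq]; nlinarith
    rw [max_eq_right hle]
    norm_num
  rw [tsum_eq_sum hzero]
  have hsum : ∑ k ∈ Finset.range n, (max (lam - ((k:ℝ)+1-1/2)*s) 0)^2
      = ∑ k ∈ Finset.range n, (lam - ((k:ℝ)+1-1/2)*s)^2 := by
    apply Finset.sum_congr rfl
    intro k hk
    simp only [Finset.mem_range] at hk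
    have hkn : (k:ℝ) + 1 ≤ (n:ℝ) := by exact_mod_cast hk
    have hge : 0 ≤ lam - ((k:ℝ)+1-1/2)*s := by
      rw [hlam_eq]; nlinarith
    rw [max_eq_left hge]
  rw [hsum, sum_formula]
  have key := key_ineq t (n:ℝ) hn1 (by linarith)
  have key2 := mul_le_mul_of_nonneg_left key (sq_nonneg s)
  calc (n:ℝ)*lam^2 - (n:ℝ)^2*lam*s + s^2*((n:ℝ)^3/3 - (n:ℝ)/12)
      = s^2 * ((n:ℝ)*t^2 - (n:ℝ)^2*t + (n:ℝ)^3/3 - (n:ℝ)/12) := by rw [hlam_eq]; ring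
    _ ≤ s^2 * (t^3/3 - t/12 + 1/(36*Real.sqrt 3)) := key2
    _ = lam ^ 3 / (3 * s) - s / 12 * lam + β / (36 * Real.sqrt 3) := by
        rw [hlam_eq, hβs]
        have h3 : Real.sqrt 3 ≠ 0 := by positivity
        field_simp
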